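/- Set Δ = σᵤ = Σ₀ = 1. For each integer N ≥ 3 let β̂_N = (β̂_{N,1},…,β̂_{N,N}) denote Kyle's N-period equilibrium and define T̃_N : ℝ → ℝ by letting T̃_N(β) be the (N−2)-th coordinate of the N-period policy-iteration map applied to the vector whose n-th entry is β̂_{N,n} for n ≠ N−2 and is β in position N−2. Then for every N ≥ 4 one has T̃_N′(β̂_{N,N−2}) = T̃_{N−1}′(β̂_{N−1,N−3}); that is, the derivative of the (N−2)-coordinate policy-iteration map at the equilibrium does not depend on N for N ≥ 3. -/

import Mathlib

/-- The posterior-variance sequence `Σₙ^β` of the `N`-period policy-iteration map: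
`Σ₀^β = Sig0` and `Σₙ^β = Σ_{n-1}^β σu²/(βₙ² Σ_{n-1}^β Δ + σu²)`. -/
noncomputable def kSig (Δ σu Sig0 : ℝ) (β : ℕ → ℝ) : ℕ → ℝ
  | 0 => Sig0
  | n + 1 =>
      kSig Δ σu Sig0 β n * σu ^ 2 /
        ((β (n + 1)) ^ 2 * kSig Δ σu Sig0 β n * Δ + σu ^ 2)

/-- Kyle's lambda `λₙ^β = βₙ Σ_{n-1}^β/(βₙ² Σ_{n-1}^β Δ + σu²)`. -/
noncomputable def kLam (Δ σu Sig0 : ℝ) (β : ℕ → ℝ) (n : ℕ) : ℝ :=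
  β n * kSig Δ σu Sig0 β (n - 1) /
    ((β n) ^ 2 * kSig Δ σu Sig0 β (n - 1) * Δ + σu ^ 2)

/-- Backward recursion for `αₙ^β`, indexed by the number of remaining steps `k = N - n`:
`α_N^β = 0` and `α_{n-1}^β = 1/(4 λₙ^β (1 - αₙ^β λₙ^β))`. -/
noncomputable def kAlphaAux (Δ σu Sig0 : ℝ) (N : ℕ) (β : ℕ → ℝ) : ℕ → ℝ
  | 0 => 0
  | k + 1 =>
      1 / (4 * kLam Δ σu Sig0 β (N - k) *
        (1 - kAlphaAux Δ σu Sig0 N β k * kLam Δ σu Sig0 β (N - k)))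

/-- `αₙ^β` for the `N`-period policy-iteration map. -/
noncomputable def kAlpha (Δ σu Sig0 : ℝ) (N : ℕ) (β : ℕ → ℝ) (n : ℕ) : ℝ :=
  kAlphaAux Δ σu Sig0 N β (N - n)

/-- The `n`-th coordinate of the `N`-period policy-iteration map:
`T(β)ₙ = (1 - 2 αₙ^β λₙ^β)/(2 Δ λₙ^β (1 - αₙ^β λₙ^β))`. -/
noncomputable def kT (Δ σu Sig0 : ℝ) (N : ℕ) (β : ℕ → ℝ) (n : ℕ) : ℝ :=
  (1 - 2 * kAlpha Δ σu Sig0 N β n * kLam Δ σu Sig0 β n) /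
    (2 * Δ * kLam Δ σu Sig0 β n *
      (1 - kAlpha Δ σu Sig0 N β n * kLam Δ σu Sig0 β n))

/-- The domain of the `N`-period policy-iteration map: all denominators
appearing in `Σ`, `λ`, `α` and `T` are nonzero. -/
def kDom (Δ σu Sig0 : ℝ) (N : ℕ) (β : ℕ → ℝ) : Prop :=
  ∀ n, 1 ≤ n → n ≤ N →
    (β n) ^ 2 * kSig Δ σu Sig0 β (n - 1) * Δ + σu ^ 2 ≠ 0 ∧
    kLam Δ σu Sig0 β n ≠ 0 ∧
    1 - kAlpha Δ σu Sig0 N β n * kLam Δ σu Sig0 β n ≠ 0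

/-- Kyle's `N`-period equilibrium data: `b` is the autonomous sequence
(`b N = 1`, `b n ∈ (0,1)` for `n < N`, backward recursion), `S` the equilibrium
variance sequence and `βh` the equilibrium trading intensities. -/
structure KyleEq (Δ σu Sig0 : ℝ) (N : ℕ) (b S βh : ℕ → ℝ) : Prop where
  hbN : b N = 1
  hbIoo : ∀ n, 1 ≤ n → n < N → b n ∈ Set.Ioo (0 : ℝ) 1
  hbrec : ∀ n, 2 ≤ n → n ≤ N →
    (b n) ^ 2 = (b (n - 1)) ^ 2 / ((1 - (b (n - 1)) ^ 2) ^ 2 * (1 + (b (n - 1)) ^ 2))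
  hS0 : S 0 = Sig0
  hSrec : ∀ n, 1 ≤ n → n ≤ N → S n = S (n - 1) / (1 + (b n) ^ 2)
  hβ : ∀ n, 1 ≤ n → n ≤ N → βh n = b n * σu / Real.sqrt (S (n - 1) * Δ)

/-- The reversed (index-from-the-end) autonomous sequence: `tb 1 = 1` and, for each
`k ≥ 1`, `tb (k+1)` is the number in `(0,1)` with
`tb k² = tb (k+1)²/((1 - tb (k+1)²)² (1 + tb (k+1)²))`.  Kyle's `N`-period
autonomous coefficients are `b̂_{N,n} = tb (N - n + 1)`. -/
def KyleTB (tb : ℕ → ℝ) : Prop :=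
  tb 1 = 1 ∧
  ∀ k, 1 ≤ k →
    tb (k + 1) ∈ Set.Ioo (0 : ℝ) 1 ∧
    (tb k) ^ 2 =
      (tb (k + 1)) ^ 2 / ((1 - (tb (k + 1)) ^ 2) ^ 2 * (1 + (tb (k + 1)) ^ 2))

/-- Kyle's `N`-period equilibrium variance sequence for `Δ = σu = Sig0 = 1`:
`Σ̂₀ = 1` and `Σ̂ₙ = Σ̂_{n-1}/(1 + b̂_{N,n}²)` where `b̂_{N,n} = tb (N - n + 1)`. -/
noncomputable def SigH (tb : ℕ → ℝ) (N : ℕ) : ℕ → ℝ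
  | 0 => 1
  | n + 1 => SigH tb N n / (1 + (tb (N - n)) ^ 2)

/-- Kyle's `N`-period equilibrium trading intensities for `Δ = σu = Sig0 = 1`:
`β̂_{N,n} = b̂_{N,n}/√(Σ̂_{N,n-1})` with `b̂_{N,n} = tb (N - n + 1)`. -/
noncomputable def betaH (tb : ℕ → ℝ) (N n : ℕ) : ℝ :=
  tb (N - n + 1) / Real.sqrt (SigH tb N (n - 1))

-- auxiliary lemmas

lemma SigH_pos (tb : ℕ → ℝ) (N : ℕ) : ∀ m, 0 < SigH tb N m := by
  intro m
  induction m with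
  | zero => simp [SigH]
  | succ n ih => rw [SigH]; positivity

noncomputable def Bfun (tb : ℕ → ℝ) (N : ℕ) (x : ℝ) : ℕ → ℝ :=
  fun n => if n = N - 2 then x else betaH tb N n

noncomputable def Cfun (tb : ℕ → ℝ) (y : ℝ) : ℕ → ℝ :=
  fun n => if n = 1 then y else betaH tb 3 n

lemma hinv1 (s Y b : ℝ) (hs : s ≠ 0) : 1/(s*Y) * (s*b) = 1/Y * b := by
  rw [one_div_mul_eq_div, one_div_mul_eq_div, mul_div_mul_left b Y hs]

lemma hinv3 (P s D : ℝ) : P / (s * D) = s⁻¹ * (P / D) := by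
  rw [mul_comm s D, ← div_div, div_eq_mul_inv (P/D) s, mul_comm]

lemma sig_corr (s b S b' : ℝ) (hs : s ≠ 0) (hb : b' = b / s) :
    (s^2*S) * 1^2 / (b'^2 * (s^2*S) * 1 + 1^2) = s^2 * (S * 1^2 / (b^2 * S * 1 + 1^2)) := by
  subst hb
  have h1 : (b/s)^2 * (s^2*S) * 1 = b^2 * S * 1 := by
    field_simp
  rw [h1, mul_assoc, mul_div_assoc]

lemma lam_corr (s b S b' : ℝ) (hs : s ≠ 0) (hb : b' = b / s) :
    b' * (s^2*S) / (b'^2 * (s^2*S) * 1 + 1^2) = s * (b * S / (b^2 * S * 1 + 1^2)) := by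
  subst hb
  have h1 : (b/s)^2 * (s^2*S) * 1 = b^2 * S * 1 := by
    field_simp
  have h2 : b/s * (s^2*S) = s * (b * S) := by
    field_simp
  rw [h1, h2, mul_div_assoc]

lemma key_all (tb : ℕ → ℝ) (N : ℕ) (hN : 3 ≤ N) (x : ℝ) :
    kT 1 1 1 N (Bfun tb N x) (N-2) =
      (Real.sqrt (SigH tb N (N-3)))⁻¹ *
        kT 1 1 1 3 (Cfun tb (Real.sqrt (SigH tb N (N-3)) * x)) 1 := by
  have hc : 0 < SigH tb N (N-3) := SigH_pos tb N (N-3)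
  set s := Real.sqrt (SigH tb N (N-3)) with hs_def
  have hs0 : 0 < s := Real.sqrt_pos.mpr hc
  have hs : s ≠ 0 := ne_of_gt hs0
  have hs2 : s^2 = SigH tb N (N-3) := Real.sq_sqrt hc.le
  set C := Cfun tb (s * x) with hC_def
  set B := Bfun tb N x with hB_def
  have hC1 : C 1 = s * x := by simp [hC_def, Cfun]
  have hC2 : C 2 = betaH tb 3 2 := by simp [hC_def, Cfun]
  have hC3 : C 3 = betaH tb 3 3 := by simp [hC_def, Cfun]
  have hBx : B (N-2) = x := by simp [hB_def, Bfun]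
  -- frozen sigma sequence agrees with equilibrium up to N-3
  have hkS : ∀ m, m + 3 ≤ N → kSig 1 1 1 B m = SigH tb N m := by
    intro m
    induction m with
    | zero => intro _; simp [kSig, SigH]
    | succ m ih =>
      intro h
      have hpos := SigH_pos tb N m
      have hne : m + 1 ≠ N - 2 := by omega
      have hBm : B (m+1) = tb (N-m) / Real.sqrt (SigH tb N m) := by
        rw [hB_def]
        simp only [Bfun, if_neg hne, betaH]
        rw [show N - (m+1) + 1 = N - m by omega, show m + 1 - 1 = m from rfl]
      have hβ2 : (tb (N-m)/Real.sqrt (SigH tb N m))^2 * SigH tb N m * 1 = tb (N-m)^2 := by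
        rw [div_pow, Real.sq_sqrt hpos.le, mul_one, div_mul_cancel₀ _ hpos.ne']
      simp only [kSig]
      rw [ih (by omega), hBm, hβ2]
      simp only [SigH]
      rw [show (1:ℝ)^2 = 1 by norm_num, mul_one, add_comm (tb (N-m)^2) 1]
  have hSc : kSig 1 1 1 B (N-3) = s^2 * 1 := by
    rw [hkS (N-3) (by omega), mul_one, hs2]
  -- equilibrium variances relations
  have hq1 : SigH tb N (N-2) = SigH tb N (N-3) * SigH tb 3 1 := by
    rw [show N - 2 = N - 3 + 1 by omega]
    simp only [SigH]
    rw [show N - (N-3) = 3 by omega, show (3:ℕ) - 0 = 3 from rfl, mul_one_div]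
  have hq2 : SigH tb N (N-1) = SigH tb N (N-3) * SigH tb 3 2 := by
    rw [show N - 1 = N - 2 + 1 by omega]
    simp only [SigH]
    rw [hq1]
    simp only [SigH]
    rw [show N - (N-2) = 2 by omega, show (3:ℕ) - 0 = 3 from rfl,
      show (3:ℕ) - 1 = 2 from rfl, mul_div_assoc]
  -- frozen beta relations
  have hb2 : betaH tb N (N-1) = betaH tb 3 2 / s := by
    simp only [betaH]
    rw [show N - (N-1) + 1 = 2 by omega, show N - 1 - 1 = N - 2 by omega,
      show (3:ℕ) - 2 + 1 = 2 from rfl, show (2:ℕ) - 1 = 1 from rfl,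
      hq1, Real.sqrt_mul hc.le, ← hs_def, div_div,
      mul_comm s (Real.sqrt (SigH tb 3 1)), ← div_div]
  have hb3 : betaH tb N N = betaH tb 3 3 / s := by
    simp only [betaH]
    rw [show N - N + 1 = 1 by omega, show (3:ℕ) - 3 + 1 = 1 from rfl,
      show (3:ℕ) - 1 = 2 from rfl,
      hq2, Real.sqrt_mul hc.le, ← hs_def, div_div,
      mul_comm s (Real.sqrt (SigH tb 3 2)), ← div_div]
  have hBN1 : B (N-1) = betaH tb 3 2 / s := by
    rw [hB_def]; simp only [Bfun, if_neg (show N - 1 ≠ N - 2 by omega)]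
    exact hb2
  have hBN : B N = betaH tb 3 3 / s := by
    rw [hB_def]; simp only [Bfun, if_neg (show N ≠ N - 2 by omega)]
    exact hb3
  have hbx : x = (s * x) / s := by rw [mul_div_cancel_left₀ x hs]
  -- sigma correspondences
  have hS1 : kSig 1 1 1 B (N-2) = s^2 * kSig 1 1 1 C 1 := by
    rw [show N - 2 = N - 3 + 1 by omega]
    simp only [kSig]
    rw [show N - 3 + 1 = N - 2 by omega, hBx, hSc, hC1]
    exact sig_corr s (s*x) 1 x hs hbx
  have hS2 : kSig 1 1 1 B (N-1) = s^2 * kSig 1 1 1 C 2 := by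
    rw [show N - 1 = N - 2 + 1 by omega]
    simp only [kSig]
    rw [show N - 2 + 1 = N - 1 by omega, hBN1, hS1, hC1]
    exact sig_corr s (betaH tb 3 2) (1 * 1 ^ 2 / ((s*x) ^ 2 * 1 * 1 + 1 ^ 2))
      (betaH tb 3 2 / s) hs rfl
  -- lambda correspondences
  have hL2 : kLam 1 1 1 B (N-2) = s * kLam 1 1 1 C 1 := by
    simp only [kLam]
    rw [show N - 2 - 1 = N - 3 by omega, show (1:ℕ) - 1 = 0 from rfl]
    simp only [kSig]
    rw [hBx, hSc, hC1]
    exact lam_corr s (s*x) 1 x hs hbx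
  have hL1 : kLam 1 1 1 B (N-1) = s * kLam 1 1 1 C 2 := by
    simp only [kLam]
    rw [show N - 1 - 1 = N - 2 by omega, show (2:ℕ) - 1 = 1 from rfl,
      hS1, hBN1, hC2]
    exact lam_corr s (betaH tb 3 2) (kSig 1 1 1 C 1) (betaH tb 3 2 / s) hs rfl
  have hL0 : kLam 1 1 1 B N = s * kLam 1 1 1 C 3 := by
    simp only [kLam]
    rw [show (3:ℕ) - 1 = 2 from rfl, hS2, hBN, hC3]
    exact lam_corr s (betaH tb 3 3) (kSig 1 1 1 C 2) (betaH tb 3 3 / s) hs rfl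
  -- now unfold kT and kAlpha
  simp only [kT, kAlpha, kAlphaAux, show N - (N-2) = 2 by omega,
    show (3:ℕ) - 1 = 2 from rfl, Nat.sub_zero]
  rw [hL0, hL1, hL2]
  generalize kLam 1 1 1 C 1 = l
  generalize kLam 1 1 1 C 2 = b
  generalize kLam 1 1 1 C 3 = a
  simp only [zero_mul, sub_zero, mul_one]
  have e1 : 1/(4*(s*a)) * (s*b) = 1/(4*a)*b := by
    rw [show 4*(s*a) = s*(4*a) by ring]; exact hinv1 s (4*a) b hs
  rw [e1]
  have e2 : 1/(4*(s*b)*(1 - 1/(4*a)*b)) * (s*l) = 1/(4*b*(1 - 1/(4*a)*b)) * l := by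
    rw [show 4*(s*b)*(1 - 1/(4*a)*b) = s*(4*b*(1 - 1/(4*a)*b)) by ring]
    exact hinv1 s _ l hs
  rw [show (2:ℝ) * (1/(4*(s*b)*(1 - 1/(4*a)*b))) * (s*l)
      = 2*(1/(4*b*(1 - 1/(4*a)*b)) * l) by rw [mul_assoc, e2]]
  rw [e2]
  rw [show (2:ℝ)*(s*l)*(1 - 1/(4*b*(1 - 1/(4*a)*b))*l)
      = s*(2*l*(1 - 1/(4*b*(1-1/(4*a)*b))*l)) by ring]
  rw [hinv3]
  ring

lemma deriv_comp_mul_left'' (s : ℝ) (hs : s ≠ 0) (g : ℝ → ℝ) (x : ℝ) :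
    deriv (fun y => g (s * y)) x = s * deriv g (s * x) := by
  by_cases hg : DifferentiableAt ℝ g (s * x)
  · have h2 : DifferentiableAt ℝ (fun y : ℝ => s * y) x := (differentiableAt_id.const_mul s)
    have := deriv_comp x hg h2
    simp only [Function.comp_def] at this
    rw [this, deriv_const_mul_field, deriv_id'', mul_one, mul_comm]
  · have hF : ¬ DifferentiableAt ℝ (fun y => g (s * y)) x := by
      intro hF
      apply hg
      have h3 : DifferentiableAt ℝ ((fun y => g (s * y)) ∘ (fun y : ℝ => s⁻¹ * y)) (s * x) := by
        apply DifferentiableAt.comp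
        · simpa [inv_mul_cancel_left₀ hs] using hF
        · exact (differentiableAt_id.const_mul s⁻¹)
      have heq : ((fun y => g (s * y)) ∘ (fun y : ℝ => s⁻¹ * y)) = g := by
        funext y; simp [Function.comp, mul_inv_cancel_left₀ hs]
      rwa [heq] at h3
    rw [deriv_zero_of_not_differentiableAt hg, deriv_zero_of_not_differentiableAt hF, mul_zero]

lemma kyle_reduce (tb : ℕ → ℝ) (N : ℕ) (hN : 3 ≤ N) :
    deriv (fun x =>
        kT 1 1 1 N (fun n => if n = N - 2 then x else betaH tb N n) (N - 2))
      (betaH tb N (N - 2)) =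
    deriv (fun y =>
        kT 1 1 1 3 (fun n => if n = 1 then y else betaH tb 3 n) 1) (tb 3) := by
  have hc : 0 < SigH tb N (N-3) := SigH_pos tb N (N-3)
  have hs0 : 0 < Real.sqrt (SigH tb N (N-3)) := Real.sqrt_pos.mpr hc
  have hs : Real.sqrt (SigH tb N (N-3)) ≠ 0 := ne_of_gt hs0
  have hfun : (fun x =>
        kT 1 1 1 N (fun n => if n = N - 2 then x else betaH tb N n) (N - 2)) =
      (fun x => (Real.sqrt (SigH tb N (N-3)))⁻¹ *
        kT 1 1 1 3 (fun n => if n = 1 then Real.sqrt (SigH tb N (N-3)) * x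
          else betaH tb 3 n) 1) := by
    funext x
    exact key_all tb N hN x
  rw [hfun, deriv_const_mul_field]
  have hD := deriv_comp_mul_left'' (Real.sqrt (SigH tb N (N-3))) hs
    (fun y => kT 1 1 1 3 (fun n => if n = 1 then y else betaH tb 3 n) 1)
    (betaH tb N (N-2))
  rw [hD]
  have hx0 : betaH tb N (N-2) = tb 3 / Real.sqrt (SigH tb N (N-3)) := by
    simp only [betaH]
    rw [show N - (N-2) + 1 = 3 by omega, show N - 2 - 1 = N - 3 by omega]
  rw [hx0, show Real.sqrt (SigH tb N (N-3)) * (tb 3 / Real.sqrt (SigH tb N (N-3)))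
      = tb 3 by field_simp, inv_mul_cancel_left₀ hs]


/-- With `Δ = σu = Sig0 = 1`, for every `N ≥ 4` the derivative at the equilibrium of
the `(N-2)`-coordinate policy-iteration map `T̃_N` (all coordinates other than
`N - 2` frozen at Kyle's `N`-period equilibrium) satisfies
`T̃_N'(β̂_{N,N-2}) = T̃_{N-1}'(β̂_{N-1,N-3})`; i.e. it does not depend on `N ≥ 3`. -/
theorem derivative_independent_of_N (tb : ℕ → ℝ) (htb : KyleTB tb) :
    ∀ N : ℕ, 4 ≤ N →
      deriv (fun x =>
          kT 1 1 1 N (fun n => if n = N - 2 then x else betaH tb N n) (N - 2))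
        (betaH tb N (N - 2)) =
      deriv (fun x =>
          kT 1 1 1 (N - 1)
            (fun n => if n = (N - 1) - 2 then x else betaH tb (N - 1) n) ((N - 1) - 2))
        (betaH tb (N - 1) ((N - 1) - 2)) := by
  intro N hN
  rw [kyle_reduce tb N (by omega), kyle_reduce tb (N - 1) (by omega)]
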